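/- Let Ψ be a family of holomorphic maps ψ : {|ζ| < 1} → ℂ² that is compact in the topology of locally uniform convergence, and suppose every ψ ∈ Ψ is nonconstant. Then there exist ε > 0 and 0 < r < 1 such that for each ψ ∈ Ψ there is ρ ≤ r with |ψ(ζ) − ψ(0)| ≥ ε for all |ζ| = ρ. -/

import Mathlib

open Metric Set

/-- For a nonconstant holomorphic map on the unit disc, there is a small circle
on which the map differs from its value at the origin. -/
lemma stmt17_aux (g : ℂ → ℂ × ℂ) (hg : DifferentiableOn ℂ g (Metric.ball 0 1))
    (hnc : ∃ ζ ∈ Metric.ball (0:ℂ) 1, g ζ ≠ g 0) :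
    ∃ ρ : ℝ, 0 < ρ ∧ ρ ≤ 1/2 ∧ ∀ ζ : ℂ, ‖ζ‖ = ρ → g ζ ≠ g 0 := by
  obtain ⟨ζ₀, hζ₀, hne⟩ := hnc
  set h : ℂ → ℂ × ℂ := fun z => g z - g 0 with hh_def
  have hh : AnalyticOnNhd ℂ h (Metric.ball 0 1) :=
    (hg.sub_const (g 0)).analyticOnNhd Metric.isOpen_ball
  have hmem : (0:ℂ) ∈ Metric.ball (0:ℂ) 1 := by simp
  have hnotfreq : ¬ (∃ᶠ z in nhdsWithin (0:ℂ) {(0:ℂ)}ᶜ, h z = 0) := by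
    intro hfreq
    have hEq := hh.eqOn_zero_of_preconnected_of_frequently_eq_zero
      ((convex_ball (0:ℂ) 1).isPreconnected) hmem hfreq
    have := hEq hζ₀
    simp only [hh_def, Pi.zero_apply, sub_eq_zero] at this
    exact hne this
  have hev : ∀ᶠ z in nhdsWithin (0:ℂ) {(0:ℂ)}ᶜ, h z ≠ 0 := by
    simpa using (Filter.not_frequently.mp hnotfreq)
  obtain ⟨δ, hδpos, hδ⟩ := Metric.eventually_nhds_iff.mp (eventually_nhdsWithin_iff.mp hev)
  refine ⟨min (δ/2) (1/2), by positivity, min_le_right _ _, ?_⟩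
  intro ζ hζ hEq
  have hζne : ζ ≠ 0 := by
    intro h0
    rw [h0, norm_zero] at hζ
    have hpos : (0:ℝ) < min (δ/2) (1/2) := by positivity
    exact hpos.ne hζ
  have hζlt : dist ζ 0 < δ := by
    rw [Complex.dist_eq, sub_zero]
    calc ‖ζ‖ = min (δ/2) (1/2) := hζ
    _ ≤ δ/2 := min_le_left _ _
    _ < δ := by linarith
  exact hδ hζlt (by simpa using hζne) (by simp [hh_def, sub_eq_zero, hEq])

/-- Lemma 2.8: for a compact family (in the topology of locally uniform
convergence) of nonconstant holomorphic maps `ψ : {|ζ| < 1} → ℂ²`, there are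
uniform `ε > 0` and `0 < r < 1` such that each member satisfies
`|ψ(ζ) − ψ(0)| ≥ ε` on some circle `|ζ| = ρ` with `ρ ≤ r`. -/
theorem stmt17 {K : Type*} [TopologicalSpace K] [CompactSpace K]
    (F : K → ℂ → ℂ × ℂ)
    (hcont : ContinuousOn (fun p : K × ℂ => F p.1 p.2)
      (Set.univ ×ˢ Metric.ball 0 1))
    (hdiff : ∀ i, DifferentiableOn ℂ (F i) (Metric.ball 0 1))
    (hnc : ∀ i, ∃ ζ ∈ Metric.ball (0:ℂ) 1, F i ζ ≠ F i 0) :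
    ∃ ε : ℝ, 0 < ε ∧ ∃ r : ℝ, 0 < r ∧ r < 1 ∧
      ∀ i, ∃ ρ : ℝ, 0 < ρ ∧ ρ ≤ r ∧
        ∀ ζ : ℂ, ‖ζ‖ = ρ → ε ≤ ‖F i ζ - F i 0‖ := by
  rcases isEmpty_or_nonempty K with hK | hK
  · exact ⟨1, one_pos, 1/2, by norm_num, by norm_num, fun i => (hK.false i).elim⟩
  -- joint continuity of the norm difference
  set G : K × ℂ → ℝ := fun p => ‖F p.1 p.2 - F p.1 0‖ with hG_def
  have hG : ContinuousOn G (Set.univ ×ˢ Metric.ball 0 1) := by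
    apply ContinuousOn.norm
    apply hcont.sub
    have hc2 : Continuous (fun p : K × ℂ => (p.1, (0:ℂ))) :=
      continuous_fst.prodMk continuous_const
    exact hcont.comp hc2.continuousOn (fun p hp => ⟨trivial, by simp⟩)
  -- for each index, a circle, a lower bound, and an open neighborhood
  have step : ∀ i : K, ∃ ρ : ℝ, 0 < ρ ∧ ρ ≤ 1/2 ∧ ∃ c : ℝ, 0 < c ∧
      ∃ u : Set K, IsOpen u ∧ i ∈ u ∧
        ∀ j ∈ u, ∀ ζ : ℂ, ‖ζ‖ = ρ → c ≤ ‖F j ζ - F j 0‖ := by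
    intro i
    obtain ⟨ρ, hρ0, hρhalf, hρ⟩ := stmt17_aux (F i) (hdiff i) (hnc i)
    have hsub : Metric.sphere (0:ℂ) ρ ⊆ Metric.ball 0 1 := fun z hz => by
      rw [Metric.mem_sphere] at hz
      rw [Metric.mem_ball, hz]
      linarith
    have hsphere_abs : ∀ ζ : ℂ, ζ ∈ Metric.sphere (0:ℂ) ρ ↔ ‖ζ‖ = ρ := by
      intro ζ; rw [Metric.mem_sphere, Complex.dist_eq, sub_zero]
    -- minimum of G (i, ·) on the sphere
    have hGi : ContinuousOn (fun ζ : ℂ => G (i, ζ)) (Metric.sphere (0:ℂ) ρ) := by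
      refine hG.comp (Continuous.continuousOn ?_) (fun ζ hζ => ?_)
      · exact continuous_const.prodMk continuous_id
      · exact ⟨trivial, hsub hζ⟩
    have hne : (Metric.sphere (0:ℂ) ρ).Nonempty :=
      NormedSpace.sphere_nonempty.mpr hρ0.le
    obtain ⟨ζmin, hζmin, hmin⟩ :=
      (isCompact_sphere (0:ℂ) ρ).exists_isMinOn hne hGi
    have hc0 : 0 < G (i, ζmin) := by
      have : F i ζmin ≠ F i 0 := hρ ζmin ((hsphere_abs ζmin).mp hζmin)
      simpa [hG_def, sub_eq_zero] using this
    set c := G (i, ζmin) with hc_def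
    -- the tube lemma
    have hopen : IsOpen ((Set.univ ×ˢ Metric.ball 0 1) ∩ G ⁻¹' (Set.Ioi (c/2))) :=
      hG.isOpen_inter_preimage (isOpen_univ.prod Metric.isOpen_ball) isOpen_Ioi
    have hincl : ({i} ×ˢ Metric.sphere (0:ℂ) ρ) ⊆
        (Set.univ ×ˢ Metric.ball 0 1) ∩ G ⁻¹' (Set.Ioi (c/2)) := by
      rintro ⟨j, ζ⟩ ⟨hj, hζ⟩
      simp only [Set.mem_singleton_iff] at hj
      subst hj
      refine ⟨⟨trivial, hsub hζ⟩, ?_⟩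
      have h2 : c ≤ G (j, ζ) := hmin hζ
      simp only [Set.mem_preimage, Set.mem_Ioi]
      linarith
    obtain ⟨u, v, hu_open, _, hiu, hsv, huv⟩ :=
      generalized_tube_lemma isCompact_singleton (isCompact_sphere (0:ℂ) ρ)
        hopen hincl
    refine ⟨ρ, hρ0, hρhalf, c/2, by linarith, u, hu_open, hiu rfl, ?_⟩
    intro j hj ζ hζ
    have hζs : ζ ∈ v := hsv ((hsphere_abs ζ).mpr hζ)
    have := huv (Set.mk_mem_prod hj hζs)
    exact le_of_lt this.2
  choose ρ hρ0 hρhalf c hc u hu hiu hU using step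
  obtain ⟨t, ht⟩ := isCompact_univ.elim_finite_subcover u hu
    (fun k _ => Set.mem_iUnion.mpr ⟨k, hiu k⟩)
  have htne : t.Nonempty := by
    obtain ⟨k⟩ := hK
    obtain ⟨i, hi⟩ := Set.mem_iUnion₂.mp (ht (Set.mem_univ k))
    exact ⟨i, hi.1⟩
  refine ⟨t.inf' htne (fun i => c i / 2), ?_, 1/2, by norm_num, by norm_num, ?_⟩
  · rw [Finset.lt_inf'_iff]
    intro i _
    have := hc i
    linarith
  · intro j
    obtain ⟨i, hit, hji⟩ := Set.mem_iUnion₂.mp (ht (Set.mem_univ j))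
    refine ⟨ρ i, hρ0 i, hρhalf i, fun ζ hζ => ?_⟩
    calc t.inf' htne (fun i => c i / 2) ≤ c i / 2 := Finset.inf'_le _ hit
    _ ≤ ‖F j ζ - F j 0‖ := by
        have h1 := hU i j hji ζ hζ
        have h2 := hc i
        linarith
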